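/- arXiv:2511.18661 — 4 statements merged into one kernel-verified Lean document; each statement's English description precedes it below -/
import Mathlib

section
/- Let Q be symmetric positive definite and w* ≠ 0. For the loss L(w) = 3s^2 + 3s*^2 - 4u^2 - 2 s* s with s = w^T Qw, u = w^T Q w*, s* = (w*)^T Q w*, the set of critical points (zeros of ∇L) is exactly {0, w*, -w*} ∪ {w : u(w) = 0 and s(w) = s*/3}. -/
open Matrix

/-- Critical points of the phase-retrieval loss: with
`∇L(w) = (12 s - 4 s*) Q w - 8 u Q w*`, `s = wᵀQw`, `u = wᵀQw*`,
`s* = (w*)ᵀQw*`, `Q` symmetric positive definite and `w* ≠ 0`, the critical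
points are exactly `{0, w*, -w*} ∪ {w : u = 0 ∧ s = s*/3}`. -/
theorem stmt_3 (d : ℕ) (Q : Matrix (Fin d) (Fin d) ℝ) (hsym : Q.IsSymm)
    (hQ : Q.PosDef) (wstar : Fin d → ℝ) (hwstar : wstar ≠ 0)
    (w : Fin d → ℝ) :
    (12 * (w ⬝ᵥ Q.mulVec w) - 4 * (wstar ⬝ᵥ Q.mulVec wstar)) • Q.mulVec w
        - (8 * (w ⬝ᵥ Q.mulVec wstar)) • Q.mulVec wstar = 0
    ↔ (w = 0 ∨ w = wstar ∨ w = -wstar ∨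
        (w ⬝ᵥ Q.mulVec wstar = 0 ∧
          w ⬝ᵥ Q.mulVec w = (wstar ⬝ᵥ Q.mulVec wstar) / 3)) := by
  have hQinj : ∀ v : Fin d → ℝ, Q.mulVec v = 0 → v = 0 := by
    intro v hv
    by_contra h
    have h2 := hQ.dotProduct_mulVec_pos h
    rw [hv] at h2
    simp at h2
  have hsspos : 0 < wstar ⬝ᵥ Q.mulVec wstar := by
    have := hQ.dotProduct_mulVec_pos hwstar
    simpa using this
  have hssne : wstar ⬝ᵥ Q.mulVec wstar ≠ 0 := ne_of_gt hsspos
  constructor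
  · intro h
    have h1 : Q.mulVec ((12 * (w ⬝ᵥ Q.mulVec w) - 4 * (wstar ⬝ᵥ Q.mulVec wstar)) • w
        - (8 * (w ⬝ᵥ Q.mulVec wstar)) • wstar) = 0 := by
      rw [Matrix.mulVec_sub, Matrix.mulVec_smul, Matrix.mulVec_smul]
      exact h
    have h2 := hQinj _ h1
    have h3 : (12 * (w ⬝ᵥ Q.mulVec w) - 4 * (wstar ⬝ᵥ Q.mulVec wstar)) • w
        = (8 * (w ⬝ᵥ Q.mulVec wstar)) • wstar := sub_eq_zero.mp h2
    by_cases hc : 12 * (w ⬝ᵥ Q.mulVec w) - 4 * (wstar ⬝ᵥ Q.mulVec wstar) = 0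
    · right; right; right
      rw [hc, zero_smul, eq_comm, smul_eq_zero] at h3
      have hu0 : w ⬝ᵥ Q.mulVec wstar = 0 := by
        rcases h3 with h3 | h3
        · linarith
        · exact absurd h3 hwstar
      exact ⟨hu0, by linarith⟩
    · set t := (8 * (w ⬝ᵥ Q.mulVec wstar)) /
        (12 * (w ⬝ᵥ Q.mulVec w) - 4 * (wstar ⬝ᵥ Q.mulVec wstar)) with ht
      have hw : w = t • wstar := by
        rw [ht, div_eq_inv_mul, mul_smul, ← h3, inv_smul_smul₀ hc]
      have hs2 : w ⬝ᵥ Q.mulVec w = t * t * (wstar ⬝ᵥ Q.mulVec wstar) := by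
        rw [hw, Matrix.mulVec_smul, smul_dotProduct, dotProduct_smul, smul_eq_mul,
          smul_eq_mul]
        ring
      have hu2 : w ⬝ᵥ Q.mulVec wstar = t * (wstar ⬝ᵥ Q.mulVec wstar) := by
        rw [hw, smul_dotProduct, smul_eq_mul]
      have htc : t * (12 * (w ⬝ᵥ Q.mulVec w) - 4 * (wstar ⬝ᵥ Q.mulVec wstar))
          = 8 * (w ⬝ᵥ Q.mulVec wstar) := by
        rw [ht]; field_simp
      rw [hs2, hu2] at htc
      have hfac : t * (t - 1) * (t + 1) * (wstar ⬝ᵥ Q.mulVec wstar) = 0 := by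
        nlinarith [htc]
      rcases mul_eq_zero.mp hfac with hfac | hfac
      · rcases mul_eq_zero.mp hfac with hfac | hfac
        · rcases mul_eq_zero.mp hfac with hfac | hfac
          · left; rw [hw, hfac, zero_smul]
          · right; left; rw [hw, sub_eq_zero.mp hfac, one_smul]
          -- t + 1 = 0
        · right; right; left
          have : t = -1 := by linarith
          rw [hw, this, neg_one_smul]
      · exact absurd hfac hssne
  · rintro (h | h | h | ⟨hu, hs⟩)
    · rw [h]; simp
    · rw [h]
      rw [← sub_smul]
      have : 12 * (wstar ⬝ᵥ Q.mulVec wstar) - 4 * (wstar ⬝ᵥ Q.mulVec wstar)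
          - 8 * (wstar ⬝ᵥ Q.mulVec wstar) = 0 := by ring
      rw [this, zero_smul]
    · rw [h]
      have hmv : Q.mulVec (-wstar) = -Q.mulVec wstar := by
        rw [Matrix.mulVec_neg]
      rw [hmv]
      have hd1 : (-wstar) ⬝ᵥ -Q.mulVec wstar = wstar ⬝ᵥ Q.mulVec wstar := by
        simp
      have hd2 : (-wstar) ⬝ᵥ Q.mulVec wstar = -(wstar ⬝ᵥ Q.mulVec wstar) := by
        simp
      rw [hd1, hd2, smul_neg, ← neg_smul, ← sub_smul]
      have : -(12 * (wstar ⬝ᵥ Q.mulVec wstar) - 4 * (wstar ⬝ᵥ Q.mulVec wstar))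
          - 8 * -(wstar ⬝ᵥ Q.mulVec wstar) = 0 := by ring
      rw [this, zero_smul]
    · rw [hu, hs]
      have : 12 * ((wstar ⬝ᵥ Q.mulVec wstar) / 3) - 4 * (wstar ⬝ᵥ Q.mulVec wstar)
          = 0 := by ring
      rw [this, zero_smul, mul_zero, zero_smul, sub_zero]
end

section
/- With L as above (Q positive definite, w* ≠ 0): 0 is a strict local maximum of L (the Hessian at 0 is negative definite), and ±w* are strict global minima of L with L(±w*) = 0 and L(w) ≥ 0 for all w. -/
open Matrix

/-- `0` is a strict local maximum of the loss `L` (with negative definite Hessian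
`-4 s* Q - 8 (Qw*)(Qw*)ᵀ` at `0`), and `±w*` are strict global minima with
`L(±w*) = 0` and `L(w) ≥ 0` for all `w`. -/
theorem stmt_4 (d : ℕ) (Q : Matrix (Fin d) (Fin d) ℝ) (hsym : Q.IsSymm)
    (hQ : Q.PosDef) (wstar : Fin d → ℝ) (hwstar : wstar ≠ 0)
    (L : (Fin d → ℝ) → ℝ)
    (hL : L = fun v =>
      3 * (v ⬝ᵥ Q.mulVec v) ^ 2 + 3 * (wstar ⬝ᵥ Q.mulVec wstar) ^ 2
        - 4 * (v ⬝ᵥ Q.mulVec wstar) ^ 2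
        - 2 * (wstar ⬝ᵥ Q.mulVec wstar) * (v ⬝ᵥ Q.mulVec v)) :
    (∃ ε > 0, ∀ w : Fin d → ℝ, w ≠ 0 → ‖w‖ < ε → L w < L 0)
    ∧ (-((-(4 * (wstar ⬝ᵥ Q.mulVec wstar))) • Q
          - (8 : ℝ) • vecMulVec (Q.mulVec wstar) (Q.mulVec wstar))).PosDef
    ∧ L wstar = 0
    ∧ L (-wstar) = 0
    ∧ (∀ w, 0 ≤ L w)
    ∧ (∀ w, w ≠ wstar → w ≠ -wstar → 0 < L w) := by
  set s : ℝ := wstar ⬝ᵥ Q.mulVec wstar with hs_def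
  -- strict positivity of the quadratic form
  have hpos : ∀ x : Fin d → ℝ, x ≠ 0 → 0 < x ⬝ᵥ Q.mulVec x := fun x hx => by
    simpa using hQ.dotProduct_mulVec_pos hx
  have hs : 0 < s := hpos wstar hwstar
  have hnn : ∀ x : Fin d → ℝ, 0 ≤ x ⬝ᵥ Q.mulVec x := by
    intro x
    rcases eq_or_ne x 0 with rfl | hx
    · simp
    · exact le_of_lt (hpos x hx)
  -- symmetry of the bilinear form
  have hsymm : ∀ x y : Fin d → ℝ, x ⬝ᵥ Q.mulVec y = y ⬝ᵥ Q.mulVec x := by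
    intro x y
    rw [dotProduct_mulVec, ← mulVec_transpose, hsym.eq, dotProduct_comm]
  -- the key expansion
  have hexp : ∀ w : Fin d → ℝ,
      (s • w - (w ⬝ᵥ Q.mulVec wstar) • wstar) ⬝ᵥ
        Q.mulVec (s • w - (w ⬝ᵥ Q.mulVec wstar) • wstar)
      = s * (s * (w ⬝ᵥ Q.mulVec w) - (w ⬝ᵥ Q.mulVec wstar) ^ 2) := by
    intro w
    have h1 := hsymm wstar w
    simp only [Matrix.mulVec_sub, Matrix.mulVec_smul, sub_dotProduct, dotProduct_sub,
      smul_dotProduct, dotProduct_smul, smul_eq_mul, h1]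
    ring
  -- Cauchy-Schwarz for the Q-inner product
  have hCS : ∀ w : Fin d → ℝ, (w ⬝ᵥ Q.mulVec wstar) ^ 2 ≤ (w ⬝ᵥ Q.mulVec w) * s := by
    intro w
    have h := hnn (s • w - (w ⬝ᵥ Q.mulVec wstar) • wstar)
    rw [hexp w] at h
    nlinarith
  -- equality case
  have hCSeq : ∀ w : Fin d → ℝ, (w ⬝ᵥ Q.mulVec wstar) ^ 2 = (w ⬝ᵥ Q.mulVec w) * s →
      s • w = (w ⬝ᵥ Q.mulVec wstar) • wstar := by
    intro w h
    by_contra hne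
    have hne' : s • w - (w ⬝ᵥ Q.mulVec wstar) • wstar ≠ 0 := sub_ne_zero.mpr hne
    have := hpos _ hne'
    rw [hexp w] at this
    nlinarith
  -- decomposition of L
  have hLdecomp : ∀ w : Fin d → ℝ, L w =
      3 * (w ⬝ᵥ Q.mulVec w - s) ^ 2
        + 4 * ((w ⬝ᵥ Q.mulVec w) * s - (w ⬝ᵥ Q.mulVec wstar) ^ 2) := by
    intro w; rw [hL]; ring
  have hLnn : ∀ w, 0 ≤ L w := by
    intro w
    rw [hLdecomp w]
    have := hCS w
    nlinarith
  -- strict positivity away from ±wstar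
  have hLpos : ∀ w, w ≠ wstar → w ≠ -wstar → 0 < L w := by
    intro w hw1 hw2
    rcases lt_or_eq_of_le (hLnn w) with h | h
    · exact h
    exfalso
    rw [hLdecomp w] at h
    have hcs := hCS w
    have ha : w ⬝ᵥ Q.mulVec w = s := by nlinarith
    have hb : (w ⬝ᵥ Q.mulVec wstar) ^ 2 = (w ⬝ᵥ Q.mulVec w) * s := by nlinarith
    have heq := hCSeq w hb
    have hb2 : (w ⬝ᵥ Q.mulVec wstar) ^ 2 = s ^ 2 := by rw [hb, ha]; ring
    have hfac : (w ⬝ᵥ Q.mulVec wstar - s) * (w ⬝ᵥ Q.mulVec wstar + s) = 0 := by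
      nlinarith
    have : w ⬝ᵥ Q.mulVec wstar = s ∨ w ⬝ᵥ Q.mulVec wstar = -s := by
      rcases mul_eq_zero.mp hfac with h' | h'
      · left; linarith
      · right; linarith
    rcases this with hb' | hb'
    · apply hw1
      have : s • w = s • wstar := by rw [heq, hb']
      exact smul_right_injective _ (ne_of_gt hs) this
    · apply hw2
      have h' : s • w = s • (-wstar) := by
        rw [heq, hb', smul_neg, neg_smul]
      exact smul_right_injective _ (ne_of_gt hs) h'
  -- L at ±wstar
  have hLw : L wstar = 0 := by rw [hL]; ring
  have hLnw : L (-wstar) = 0 := by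
    rw [hL]
    simp only [Matrix.mulVec_neg, neg_dotProduct, dotProduct_neg, neg_neg]
    ring
  -- local maximum at 0
  have hL0 : L 0 = 3 * s ^ 2 := by rw [hL]; simp
  have hcont : Continuous fun w : Fin d → ℝ => w ⬝ᵥ Q.mulVec w := by
    simp only [dotProduct, Matrix.mulVec]
    fun_prop
  have hloc : ∃ ε > 0, ∀ w : Fin d → ℝ, w ≠ 0 → ‖w‖ < ε → L w < L 0 := by
    have htend : Filter.Tendsto (fun w : Fin d → ℝ => w ⬝ᵥ Q.mulVec w)
        (nhds 0) (nhds 0) := by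
      have := hcont.tendsto 0
      simpa using this
    have hev : ∀ᶠ w : Fin d → ℝ in nhds 0, w ⬝ᵥ Q.mulVec w < 2 / 3 * s :=
      htend.eventually_lt_const (by positivity)
    rcases Metric.eventually_nhds_iff_ball.mp hev with ⟨ε, hε, hball⟩
    refine ⟨ε, hε, fun w hw hwε => ?_⟩
    have haw : 0 < w ⬝ᵥ Q.mulVec w := hpos w hw
    have hasmall : w ⬝ᵥ Q.mulVec w < 2 / 3 * s := by
      apply hball
      simpa [Metric.mem_ball, dist_eq_norm] using hwε
    have hb2 : 0 ≤ (w ⬝ᵥ Q.mulVec wstar) ^ 2 := sq_nonneg _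
    rw [hL0, hL]
    simp only
    nlinarith
  -- Hessian positive definiteness
  have hHess : (-((-(4 * s)) • Q
          - (8 : ℝ) • vecMulVec (Q.mulVec wstar) (Q.mulVec wstar))).PosDef := by
    set v : Fin d → ℝ := Q.mulVec wstar with hv
    have hmat : -((-(4 * s)) • Q - (8 : ℝ) • vecMulVec v v)
        = (4 * s) • Q + (8 : ℝ) • vecMulVec v v := by
      module
    rw [hmat]
    have h1 : ((4 * s) • Q).PosDef := by
      refine PosDef.of_dotProduct_mulVec_pos ?_ (fun x hx => ?_)
      · show ((4 * s) • Q)ᴴ = (4 * s) • Q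
        rw [conjTranspose_smul, hQ.1]
        simp
      · have := hpos x hx
        rw [smul_mulVec, dotProduct_smul]
        simpa using by positivity
    have h2 : ((8 : ℝ) • vecMulVec v v).PosSemidef := by
      have hVv : ∀ x : Fin d → ℝ, vecMulVec v v *ᵥ x = (v ⬝ᵥ x) • v := by
        intro x
        ext i
        simp [Matrix.mulVec, vecMulVec_apply, dotProduct, Finset.mul_sum, mul_assoc,
          mul_comm, mul_left_comm]
      refine PosSemidef.of_dotProduct_mulVec_nonneg ?_ (fun x => ?_)
      · show ((8 : ℝ) • vecMulVec v v)ᴴ = (8 : ℝ) • vecMulVec v v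
        ext i j
        simp [Matrix.conjTranspose_apply, vecMulVec_apply, mul_comm]
      · rw [smul_mulVec, dotProduct_smul, hVv]
        simp only [star_trivial, dotProduct_smul, smul_eq_mul]
        rw [dotProduct_comm x v]
        nlinarith [mul_self_nonneg (v ⬝ᵥ x)]
    exact h1.add_posSemidef h2
  exact ⟨hloc, hHess, hLw, hLnw, hLnn, hLpos⟩
end

section
/- With L as above, every critical point w satisfying w^T Q w* = 0 and w^T Q w = s*/3 is a saddle point: the Hessian ∇²L(w) = 24(Qw)(Qw)^T - 8(Qw*)(Qw*)^T satisfies w^T ∇²L(w) w > 0 and (w*)^T ∇²L(w) w* < 0. -/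
open Matrix

theorem helper_vmv (d : ℕ) (x y a b : Fin d → ℝ) :
    a ⬝ᵥ (vecMulVec x y).mulVec b = (a ⬝ᵥ x) * (y ⬝ᵥ b) := by
  simp [Matrix.vecMulVec, Matrix.mulVec, dotProduct, Finset.mul_sum,
    Finset.sum_mul, mul_assoc, Matrix.of_apply]
  rw [Finset.sum_comm]

/-- Every critical point with `wᵀQw* = 0` and `wᵀQw = s*/3` is a saddle:
the Hessian `H = 24 (Qw)(Qw)ᵀ - 8 (Qw*)(Qw*)ᵀ` satisfies `wᵀHw > 0` and
`(w*)ᵀHw* < 0`. -/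
theorem stmt_5 (d : ℕ) (Q : Matrix (Fin d) (Fin d) ℝ) (hsym : Q.IsSymm)
    (hQ : Q.PosDef) (wstar w : Fin d → ℝ) (hwstar : wstar ≠ 0)
    (hu : w ⬝ᵥ Q.mulVec wstar = 0)
    (hs : w ⬝ᵥ Q.mulVec w = (wstar ⬝ᵥ Q.mulVec wstar) / 3) :
    0 < w ⬝ᵥ ((24 : ℝ) • vecMulVec (Q.mulVec w) (Q.mulVec w)
          - (8 : ℝ) • vecMulVec (Q.mulVec wstar) (Q.mulVec wstar)).mulVec w
    ∧ wstar ⬝ᵥ ((24 : ℝ) • vecMulVec (Q.mulVec w) (Q.mulVec w)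
          - (8 : ℝ) • vecMulVec (Q.mulVec wstar) (Q.mulVec wstar)).mulVec wstar
        < 0 := by
  have hspos : 0 < wstar ⬝ᵥ Q.mulVec wstar := by
    simpa using hQ.dotProduct_mulVec_pos hwstar
  have hu' : wstar ⬝ᵥ Q.mulVec w = 0 := by
    rw [dotProduct_mulVec, ← hsym.eq, vecMul_transpose, dotProduct_comm]
    exact hu
  have hQw : (Q.mulVec w) ⬝ᵥ w = wstar ⬝ᵥ Q.mulVec wstar / 3 := by
    rw [dotProduct_comm]; exact hs
  have hQws : (Q.mulVec wstar) ⬝ᵥ w = 0 := by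
    rw [dotProduct_comm]; exact hu
  have hQww : (Q.mulVec w) ⬝ᵥ wstar = 0 := by
    rw [dotProduct_comm]; exact hu'
  have hQwsw : (Q.mulVec wstar) ⬝ᵥ wstar = wstar ⬝ᵥ Q.mulVec wstar := by
    rw [dotProduct_comm]
  constructor
  · simp only [Matrix.sub_mulVec, Matrix.smul_mulVec, dotProduct_sub,
      dotProduct_smul, helper_vmv, hs, hu, hu', hQw, hQws, hQww, hQwsw, smul_eq_mul]
    nlinarith
  · simp only [Matrix.sub_mulVec, Matrix.smul_mulVec, dotProduct_sub,
      dotProduct_smul, helper_vmv, hs, hu, hu', hQw, hQws, hQww, hQwsw, smul_eq_mul]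
    nlinarith
end

section
/- For a > 1 and x > 0, the integral ∫_0^∞ (1 - e^{-(x/t)^a}) dt converges and equals x · Γ(1 - 1/a). -/
open MeasureTheory Real Set Filter Topology

lemma aux17_one_sub_exp_nonneg {y : ℝ} (hy : 0 ≤ y) : 0 ≤ 1 - Real.exp (-y) := by
  have : Real.exp (-y) ≤ Real.exp 0 := Real.exp_le_exp.mpr (by linarith)
  simp only [Real.exp_zero] at this
  linarith

lemma aux17_one_sub_exp_le (y : ℝ) : 1 - Real.exp (-y) ≤ y := by
  have := Real.add_one_le_exp (-y)
  linarith

lemma aux17_h_integrable {b : ℝ} (hb0 : 0 < b) (hb1 : b < 1) :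
    IntegrableOn (fun y : ℝ => y ^ (-b - 1) * (1 - Real.exp (-y))) (Set.Ioi 0) := by
  have hmeas : Measurable (fun y : ℝ => y ^ (-b - 1) * (1 - Real.exp (-y))) := by
    fun_prop
  rw [← Ioc_union_Ioi_eq_Ioi (zero_le_one (α := ℝ)), integrableOn_union]
  constructor
  · -- on (0, 1], bound by y ^ (-b)
    have hint : IntegrableOn (fun y : ℝ => y ^ (-b)) (Ioc (0:ℝ) 1) := by
      have := intervalIntegral.intervalIntegrable_rpow' (a := 0) (b := 1) (r := -b) (by linarith)
      rwa [intervalIntegrable_iff_integrableOn_Ioc_of_le zero_le_one] at this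
    refine hint.mono' (hmeas.aestronglyMeasurable.restrict) ?_
    filter_upwards [ae_restrict_mem measurableSet_Ioc] with y hy
    have hy0 : 0 < y := hy.1
    have h1 : 0 ≤ 1 - Real.exp (-y) := aux17_one_sub_exp_nonneg hy0.le
    have h2 : 0 ≤ y ^ (-b - 1) := rpow_nonneg hy0.le _
    rw [Real.norm_eq_abs, abs_of_nonneg (mul_nonneg h2 h1)]
    calc y ^ (-b - 1) * (1 - Real.exp (-y)) ≤ y ^ (-b - 1) * y :=
          mul_le_mul_of_nonneg_left (aux17_one_sub_exp_le y) h2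
      _ = y ^ (-b) := by
          nth_rewrite 2 [← Real.rpow_one y]
          rw [← Real.rpow_add hy0]
          norm_num
  · -- on (1, ∞), bound by y ^ (-b - 1)
    have hint : IntegrableOn (fun y : ℝ => y ^ (-b - 1)) (Ioi (1:ℝ)) := by
      rw [integrableOn_Ioi_rpow_iff zero_lt_one]
      linarith
    refine hint.mono' (hmeas.aestronglyMeasurable.restrict) ?_
    filter_upwards [ae_restrict_mem measurableSet_Ioi] with y hy
    have hy0 : 0 < y := lt_trans zero_lt_one hy
    have h1 : 0 ≤ 1 - Real.exp (-y) := aux17_one_sub_exp_nonneg hy0.le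
    have h2 : 0 ≤ y ^ (-b - 1) := rpow_nonneg hy0.le _
    rw [Real.norm_eq_abs, abs_of_nonneg (mul_nonneg h2 h1)]
    have h3 : Real.exp (-y) > 0 := Real.exp_pos _
    nlinarith

lemma aux17_gamma_integrable {b : ℝ} (hb1 : b < 1) :
    IntegrableOn (fun y : ℝ => y ^ (-b) * Real.exp (-y)) (Set.Ioi 0) := by
  have h0 := Real.GammaIntegral_convergent (s := 1 - b) (by linarith)
  have h : (fun x : ℝ => Real.exp (-x) * x ^ (1 - b - 1))
      = fun y : ℝ => y ^ (-b) * Real.exp (-y) := by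
    funext y
    rw [mul_comm]
    norm_num
  rwa [h] at h0

lemma aux17_ibp {a b : ℝ} (ha : 1 < a) (hb : b = 1 / a) :
    ∫ y in Set.Ioi (0:ℝ), y ^ (-b - 1) * (1 - Real.exp (-y))
      = a * Real.Gamma (1 - b) := by
  have ha0 : (0:ℝ) < a := by linarith
  have hb0 : 0 < b := by rw [hb]; positivity
  have hb1 : b < 1 := by
    rw [hb, div_lt_one ha0]; linarith
  have hab : a * b = 1 := by rw [hb]; field_simp
  set F : ℝ → ℝ := fun y => (-a) * y ^ (-b) * (1 - Real.exp (-y)) with hF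
  set f' : ℝ → ℝ := fun y =>
    y ^ (-b - 1) * (1 - Real.exp (-y)) - a * (y ^ (-b) * Real.exp (-y)) with hf'
  have hh := aux17_h_integrable hb0 hb1
  have hg := aux17_gamma_integrable hb1
  have f'int : IntegrableOn f' (Set.Ioi 0) := hh.sub (hg.const_mul a)
  have hderiv : ∀ y ∈ Set.Ioi (0:ℝ), HasDerivAt F (f' y) y := by
    intro y hy
    have hy0 : (0:ℝ) < y := hy
    have h1 : HasDerivAt (fun y : ℝ => y ^ (-b)) (-b * y ^ (-b - 1)) y :=
      Real.hasDerivAt_rpow_const (Or.inl hy0.ne')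
    have h2 : HasDerivAt (fun y : ℝ => 1 - Real.exp (-y)) (Real.exp (-y)) y := by
      have he : HasDerivAt (fun y : ℝ => Real.exp (-y)) (Real.exp (-y) * (-1)) y :=
        (Real.hasDerivAt_exp (-y)).comp y ((hasDerivAt_id y).neg)
      exact ((hasDerivAt_const y (1:ℝ)).sub he).congr_deriv (by ring)
    have h3 : HasDerivAt F (-a * (-b * y ^ (-b - 1)) * (1 - Real.exp (-y)) + -a * y ^ (-b) * Real.exp (-y)) y :=
      (h1.const_mul (-a)).mul h2
    convert h3 using 1
    simp only [hf']
    linear_combination (-(y ^ (-b - 1) * (1 - Real.exp (-y)))) * hab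
  have hF0 : F 0 = 0 := by simp [hF]
  have hcont : ContinuousWithinAt F (Set.Ici 0) 0 := by
    rw [ContinuousWithinAt, hF0]
    refine squeeze_zero_norm' (a := fun y => a * y ^ (1 - b)) ?_ ?_
    · filter_upwards [self_mem_nhdsWithin] with y (hy : (0:ℝ) ≤ y)
      rcases eq_or_lt_of_le hy with h | hy0
      · simp [hF, ← h, Real.zero_rpow (by linarith : (1:ℝ) - b ≠ 0)]
      · have h1 : 0 ≤ 1 - Real.exp (-y) := aux17_one_sub_exp_nonneg hy0.le
        have h2 : 0 ≤ y ^ (-b) := rpow_nonneg hy0.le _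
        have hn : ‖F y‖ = a * (y ^ (-b) * (1 - Real.exp (-y))) := by
          rw [hF]
          simp only
          rw [Real.norm_eq_abs, abs_of_nonpos
            (by nlinarith [mul_nonneg (mul_nonneg ha0.le h2) h1])]
          ring
        rw [hn]
        have hle : y ^ (-b) * (1 - Real.exp (-y)) ≤ y ^ (1 - b) := by
          calc y ^ (-b) * (1 - Real.exp (-y)) ≤ y ^ (-b) * y :=
                mul_le_mul_of_nonneg_left (aux17_one_sub_exp_le y) h2
            _ = y ^ (1 - b) := by
                nth_rewrite 2 [← Real.rpow_one y]
                rw [← Real.rpow_add hy0]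
                ring_nf
        nlinarith
    · have hc : ContinuousAt (fun y : ℝ => y ^ (1 - b)) 0 :=
        Real.continuousAt_rpow_const 0 (1 - b) (Or.inr (by linarith))
      have h5 : Tendsto (fun y : ℝ => a * y ^ (1 - b)) (𝓝[Set.Ici 0] 0)
          (𝓝 (a * (0:ℝ) ^ (1 - b))) :=
        (hc.tendsto.const_mul a).mono_left nhdsWithin_le_nhds
      simpa [Real.zero_rpow (by linarith : (1:ℝ) - b ≠ 0)] using h5
  have htop : Tendsto F atTop (𝓝 0) := by
    have t1 : Tendsto (fun y : ℝ => y ^ (-b)) atTop (𝓝 0) := tendsto_rpow_neg_atTop hb0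
    have t2 : Tendsto (fun y : ℝ => 1 - Real.exp (-y)) atTop (𝓝 (1 - 0)) :=
      tendsto_const_nhds.sub Real.tendsto_exp_neg_atTop_nhds_zero
    have h3 := (t1.const_mul (-a)).mul t2
    have h4 : F = fun y : ℝ => -a * y ^ (-b) * (1 - Real.exp (-y)) := hF
    rw [h4]
    simpa using h3
  have key := integral_Ioi_of_hasDerivAt_of_tendsto
    (f := F) (f' := f') (a := 0) (m := 0) hcont hderiv f'int htop
  rw [hF0, sub_zero] at key
  have hsub : ∫ y in Set.Ioi (0:ℝ), f' y
      = (∫ y in Set.Ioi (0:ℝ), y ^ (-b - 1) * (1 - Real.exp (-y)))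
        - ∫ y in Set.Ioi (0:ℝ), a * (y ^ (-b) * Real.exp (-y)) :=
    integral_sub hh (hg.const_mul a)
  rw [key] at hsub
  have hGamma : ∫ y in Set.Ioi (0:ℝ), y ^ (-b) * Real.exp (-y)
      = Real.Gamma (1 - b) := by
    rw [Real.Gamma_eq_integral (by linarith : (0:ℝ) < 1 - b)]
    congr 1
    funext y
    rw [mul_comm]
    norm_num
  rw [integral_const_mul, hGamma] at hsub
  linarith

/-- For `a > 1` and `x > 0`, `∫₀^∞ (1 - e^{-(x/t)^a}) dt` converges and equals
`x · Γ(1 - 1/a)`. -/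
theorem stmt_17 (a x : ℝ) (ha : 1 < a) (hx : 0 < x) :
    MeasureTheory.IntegrableOn (fun t : ℝ => 1 - Real.exp (-((x / t) ^ a)))
      (Set.Ioi 0)
    ∧ ∫ t in Set.Ioi (0 : ℝ), (1 - Real.exp (-((x / t) ^ a)))
        = x * Real.Gamma (1 - 1 / a) := by
  have ha0 : (0:ℝ) < a := by linarith
  set b : ℝ := 1 / a with hb
  have hb0 : 0 < b := by rw [hb]; positivity
  have hb1 : b < 1 := by rw [hb, div_lt_one ha0]; linarith
  have hab : a * b = 1 := by rw [hb]; field_simp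
  have hmeas : Measurable (fun t : ℝ => 1 - Real.exp (-((x / t) ^ a))) := by
    fun_prop
  -- Integrability
  have hint : MeasureTheory.IntegrableOn (fun t : ℝ => 1 - Real.exp (-((x / t) ^ a)))
      (Set.Ioi 0) := by
    rw [← Ioc_union_Ioi_eq_Ioi (zero_le_one (α := ℝ)), integrableOn_union]
    constructor
    · -- bounded by 1 on (0,1]
      refine Integrable.mono' (g := fun _ => (1:ℝ))
        (integrableOn_const measure_Ioc_lt_top.ne)
        (hmeas.aestronglyMeasurable.restrict) ?_
      filter_upwards [ae_restrict_mem measurableSet_Ioc] with t ht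
      have ht0 : 0 < t := ht.1
      have hpos : 0 ≤ (x / t) ^ a := rpow_nonneg (by positivity) _
      have h1 : 0 ≤ 1 - Real.exp (-((x / t) ^ a)) := aux17_one_sub_exp_nonneg hpos
      have h2 : 0 < Real.exp (-((x / t) ^ a)) := Real.exp_pos _
      rw [Real.norm_eq_abs, abs_of_nonneg h1]
      linarith
    · -- bounded by x^a * t^(-a) on (1, ∞)
      have hint2 : IntegrableOn (fun t : ℝ => x ^ a * t ^ (-a)) (Ioi (1:ℝ)) := by
        have : IntegrableOn (fun t : ℝ => t ^ (-a)) (Ioi (1:ℝ)) := by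
          rw [integrableOn_Ioi_rpow_iff zero_lt_one]
          linarith
        exact this.const_mul _
      refine hint2.mono' (hmeas.aestronglyMeasurable.restrict) ?_
      filter_upwards [ae_restrict_mem measurableSet_Ioi] with t ht
      have ht0 : 0 < t := lt_trans zero_lt_one ht
      have hpos : 0 ≤ (x / t) ^ a := rpow_nonneg (by positivity) _
      have h1 : 0 ≤ 1 - Real.exp (-((x / t) ^ a)) := aux17_one_sub_exp_nonneg hpos
      rw [Real.norm_eq_abs, abs_of_nonneg h1]
      have heq : x ^ a * t ^ (-a) = (x / t) ^ a := by
        rw [Real.div_rpow hx.le ht0.le, Real.rpow_neg ht0.le, div_eq_mul_inv]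
      rw [heq]
      exact aux17_one_sub_exp_le _
  refine ⟨hint, ?_⟩
  -- Step 1: substitution t = x * s
  have step1 : ∫ t in Set.Ioi (0 : ℝ), (1 - Real.exp (-((x / t) ^ a)))
      = x * ∫ s in Set.Ioi (0:ℝ), (1 - Real.exp (-(s ^ (-a)))) := by
    have h0 := integral_comp_mul_left_Ioi
      (g := fun t : ℝ => 1 - Real.exp (-((x / t) ^ a))) 0 hx
    rw [mul_zero, smul_eq_mul] at h0
    have h1 : ∫ t in Set.Ioi (0:ℝ), (1 - Real.exp (-((x / (x * t)) ^ a)))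
        = ∫ s in Set.Ioi (0:ℝ), (1 - Real.exp (-(s ^ (-a)))) := by
      apply setIntegral_congr_fun measurableSet_Ioi
      intro s hs
      have hs0 : (0:ℝ) < s := hs
      have h2 : x / (x * s) = s⁻¹ := by field_simp
      simp only [h2, Real.inv_rpow hs0.le, ← Real.rpow_neg hs0.le]
    rw [h1] at h0
    rw [h0, ← mul_assoc, mul_inv_cancel₀ hx.ne', one_mul]
  -- Step 2: substitution y = s ^ (-a)
  have step2 : ∫ s in Set.Ioi (0:ℝ), (1 - Real.exp (-(s ^ (-a))))
      = ∫ y in Set.Ioi (0:ℝ), (1/a) * (y ^ (-b - 1) * (1 - Real.exp (-y))) := by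
    rw [← integral_comp_rpow_Ioi
      (fun y : ℝ => (1/a) * (y ^ (-b - 1) * (1 - Real.exp (-y))))
      (p := -a) (by simpa using ha0.ne')]
    apply setIntegral_congr_fun measurableSet_Ioi
    intro s hs
    have hs0 : (0:ℝ) < s := hs
    have h1 : ((s : ℝ) ^ (-a)) ^ (-b - 1) = s ^ (a * b + a) := by
      rw [← Real.rpow_mul hs0.le]
      congr 1
      ring
    have h2 : s ^ (-a - 1) * s ^ (a * b + a) = 1 := by
      rw [← Real.rpow_add hs0, hab, show -a - 1 + (1 + a) = 0 by ring, Real.rpow_zero]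
    simp only [smul_eq_mul, h1]
    rw [abs_neg, abs_of_pos ha0]
    rw [show a * s ^ (-a - 1) * (1 / a * (s ^ (a * b + a) * (1 - Real.exp (-s ^ (-a)))))
      = (a * (1 / a)) * (s ^ (-a - 1) * s ^ (a * b + a)) * (1 - Real.exp (-s ^ (-a))) by ring,
      h2, mul_one_div_cancel ha0.ne']
    ring
  -- Step 3: the integration by parts
  have step3 : ∫ y in Set.Ioi (0:ℝ), (1/a) * (y ^ (-b - 1) * (1 - Real.exp (-y)))
      = (1/a) * (a * Real.Gamma (1 - b)) := by
    rw [integral_const_mul, aux17_ibp ha hb]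
  rw [step1, step2, step3]
  field_simp
end
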